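/- Let T be a bounded linear operator on a normed space X. If for every x ∈ X there exists a strictly increasing sequence of positive integers {n_k} (depending on x) with sup_k (n_{k+1} − n_k) < ∞ such that f(T^{n_k} x) → 0 for every f ∈ X*, then T is weakly stable, i.e., lim_{n→∞} f(T^n x) = 0 for every x ∈ X and every f ∈ X*. -/
import Mathlib


/-- **Theorem 5.3.** If a bounded linear operator `T` on a normed space `X` has a
boundedly spaced subsequence of weak quasistability for every `x ∈ X`, then `T` is
weakly stable. -/
theorem weakly_stable_of_boundedly_spaced_weak_quasistability {𝕜 X : Type*} [RCLike 𝕜]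
    [NormedAddCommGroup X] [NormedSpace 𝕜 X] (T : X →L[𝕜] X)
    (h : ∀ x : X, ∃ n : ℕ → ℕ, StrictMono n ∧ (∃ M : ℕ, ∀ k, n (k + 1) - n k ≤ M) ∧
      ∀ f : X →L[𝕜] 𝕜,
        Filter.Tendsto (fun k => f ((T ^ n k) x)) Filter.atTop (nhds 0)) :
    ∀ (x : X) (f : X →L[𝕜] 𝕜),
      Filter.Tendsto (fun m => f ((T ^ m) x)) Filter.atTop (nhds 0) := by
  intro x f
  obtain ⟨n, hmono, ⟨M, hM⟩, hconv⟩ := h x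
  rw [NormedAddCommGroup.tendsto_nhds_zero]
  intro ε hε
  have key : ∀ j : ℕ, ∃ K : ℕ, ∀ k ≥ K, ‖f ((T ^ (j + n k)) x)‖ < ε := by
    intro j
    have h1 := hconv (f.comp (T ^ j))
    rw [NormedAddCommGroup.tendsto_nhds_zero] at h1
    obtain ⟨K, hK⟩ := Filter.eventually_atTop.mp (h1 ε hε)
    exact ⟨K, fun k hk => by
      simpa [pow_add, ContinuousLinearMap.mul_apply] using hK k hk⟩
  choose Kf hKf using key
  set K := (Finset.range (M + 1)).sup Kf with hKdef
  refine Filter.eventually_atTop.2 ⟨n K, fun m hm => ?_⟩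
  have hKm : K ≤ m := le_trans hmono.le_apply hm
  set k := Nat.findGreatest (fun i => n i ≤ m) m with hkdef
  have hnk : n k ≤ m := Nat.findGreatest_spec (P := fun i => n i ≤ m) hKm (show n K ≤ m from hm)
  have hKk : K ≤ k := Nat.le_findGreatest (P := fun i => n i ≤ m) hKm (show n K ≤ m from hm)
  have hlt : m < n (k + 1) := by
    by_contra hcon
    push_neg at hcon
    have h2 : k + 1 ≤ k := Nat.le_findGreatest (P := fun i => n i ≤ m) (le_trans hmono.le_apply hcon) hcon
    omega
  have hgap : n (k + 1) - n k ≤ M := hM k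
  have hjM : m - n k ≤ M := by omega
  have hmem : m - n k ∈ Finset.range (M + 1) := Finset.mem_range.mpr (by omega)
  have hKle : Kf (m - n k) ≤ k := le_trans (Finset.le_sup hmem) hKk
  have := hKf (m - n k) k hKle
  have hm' : (m - n k) + n k = m := by omega
  rwa [hm'] at this
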